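/- Let m, d be positive integers and ℓ ≤ ⌈m/(d+1)⌉. If a graph G is (m,d)-connected, then for any ℓ disjoint pairs of vertices (u_1,v_1), ..., (u_ℓ, v_ℓ) in G (all 2ℓ vertices distinct), there exist ℓ pairwise vertex-disjoint paths P_1, ..., P_ℓ, each of length at most d, such that P_i connects u_i and v_i for each i. -/

import Mathlib

open SimpleGraph

variable {V : Type} [Fintype V] [DecidableEq V]

/-- A graph is `(m,d)`-connected if after deleting any set of at most `m` vertices,
the remaining graph is connected with diameter at most `d`. -/
def mdConnected {W : Type} (G : SimpleGraph W) (m d : ℕ) : Prop :=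
  ∀ U : Set W, U.ncard ≤ m →
    (G.induce Uᶜ).Connected ∧ ∀ x y : ↥(Uᶜ), (G.induce Uᶜ).dist x y ≤ d

/-- In an `(m,d)`-connected graph, any `ℓ ≤ ⌈m/(d+1)⌉` disjoint pairs of vertices can
be joined by pairwise disjoint paths of length at most `d`. -/
theorem stmt5 (G : SimpleGraph V) (m d ℓ : ℕ) (hm : 0 < m) (hd : 0 < d)
    (hℓ : ℓ ≤ ⌈(m : ℚ) / (d + 1)⌉₊)
    (hG : mdConnected G m d)
    (u v : Fin ℓ → V)
    (hdisj : Function.Injective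
      (fun p : Fin ℓ × Bool => if p.2 then u p.1 else v p.1)) :
    ∃ P : ∀ i : Fin ℓ, G.Walk (u i) (v i),
      (∀ i, (P i).IsPath ∧ (P i).length ≤ d) ∧
      ∀ i j, i ≠ j → ∀ x, x ∈ (P i).support → x ∉ (P j).support := by
  classical
  -- injectivity facts
  have huu : ∀ i j : Fin ℓ, u i = u j → i = j := fun i j h => by
    have := hdisj (a₁ := (i, true)) (a₂ := (j, true)) (by simpa using h)
    exact (Prod.ext_iff.mp this).1
  have hvv : ∀ i j : Fin ℓ, v i = v j → i = j := fun i j h => by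
    have := hdisj (a₁ := (i, false)) (a₂ := (j, false)) (by simpa using h)
    exact (Prod.ext_iff.mp this).1
  have huv : ∀ i j : Fin ℓ, u i ≠ v j := fun i j h => by
    have := hdisj (a₁ := (i, true)) (a₂ := (j, false)) (by simpa using h)
    simpa using (Prod.ext_iff.mp this).2
  have hcard : (ℓ - 1) * (d + 1) < m := by
    rcases Nat.eq_zero_or_pos ℓ with h0 | hpos
    · simpa [h0] using hm
    · have h1 : ℓ - 1 < ⌈(m : ℚ) / (d + 1)⌉₊ := by omega
      have h2 : ((ℓ - 1 : ℕ) : ℚ) < (m : ℚ) / ((d : ℚ) + 1) := Nat.lt_ceil.mp h1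
      have h3 : ((ℓ - 1 : ℕ) : ℚ) * ((d : ℚ) + 1) < m :=
        (lt_div_iff₀ (by positivity)).mp h2
      exact_mod_cast h3
  -- main induction: build the first k paths
  have main : ∀ k, k ≤ ℓ → ∃ P : ∀ i : Fin ℓ, i.val < k → G.Walk (u i) (v i),
      ∀ i : Fin ℓ, ∀ hi : i.val < k,
        (P i hi).IsPath ∧ (P i hi).length ≤ d ∧
        (∀ j : Fin ℓ, ∀ hj : j.val < k, j.val < i.val →
          ∀ x, x ∈ (P i hi).support → x ∉ (P j hj).support) ∧
        (∀ j : Fin ℓ, i.val < j.val →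
          u j ∉ (P i hi).support ∧ v j ∉ (P i hi).support) := by
    intro k
    induction k with
    | zero =>
      intro _
      exact ⟨fun i hi => absurd hi (Nat.not_lt_zero _),
        fun i hi => absurd hi (Nat.not_lt_zero _)⟩
    | succ k ih =>
      intro hk1
      obtain ⟨P, hP⟩ := ih (by omega)
      have hkℓ : k < ℓ := hk1
      let kf : Fin ℓ := ⟨k, hkℓ⟩
      -- the deletion set
      let t : Fin ℓ → Finset V := fun j =>
        if hj : j.val < k then (P j hj).support.toFinset
        else if k < j.val then {u j, v j} else ∅
      let Uf : Finset V := Finset.univ.biUnion t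
      have htcard : ∀ j : Fin ℓ, (t j).card ≤ d + 1 := by
        intro j
        by_cases hj : j.val < k
        · simp only [t, dif_pos hj]
          calc (P j hj).support.toFinset.card ≤ (P j hj).support.length :=
                List.toFinset_card_le _
            _ = (P j hj).length + 1 := Walk.length_support _
            _ ≤ d + 1 := by have := (hP j hj).2.1; omega
        · by_cases hj' : k < j.val
          · simp only [t, dif_neg hj, if_pos hj']
            have h2 : ({u j, v j} : Finset V).card ≤ 2 := by
              apply le_trans (Finset.card_insert_le _ _)
              simp
            omega
          · simp [t, dif_neg hj, if_neg hj']
      have htk : t kf = ∅ := by simp [t, kf]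
      have hUfcard : Uf.card ≤ (ℓ - 1) * (d + 1) := by
        calc Uf.card ≤ ∑ j : Fin ℓ, (t j).card := Finset.card_biUnion_le
          _ = ∑ j ∈ Finset.univ.erase kf, (t j).card := by
              rw [← Finset.sum_erase_add _ _ (Finset.mem_univ kf), htk]
              simp
          _ ≤ (Finset.univ.erase kf).card * (d + 1) := by
              apply Finset.sum_le_card_nsmul
              intro j _
              exact htcard j
          _ = (ℓ - 1) * (d + 1) := by
              rw [Finset.card_erase_of_mem (Finset.mem_univ kf)]
              simp
      have hUm : ((Uf : Set V)).ncard ≤ m := by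
        rw [Set.ncard_coe_finset]
        omega
      -- membership of supports and endpoints in Uf
      have hsubP : ∀ j : Fin ℓ, ∀ hj : j.val < k,
          ∀ x, x ∈ (P j hj).support → x ∈ Uf := by
        intro j hj x hx
        refine Finset.mem_biUnion.mpr ⟨j, Finset.mem_univ _, ?_⟩
        simp [t, dif_pos hj, hx]
      have hsubE : ∀ j : Fin ℓ, k < j.val → u j ∈ Uf ∧ v j ∈ Uf := by
        intro j hj
        constructor <;>
        · refine Finset.mem_biUnion.mpr ⟨j, Finset.mem_univ _, ?_⟩
          simp [t, dif_neg (by omega : ¬ j.val < k), if_pos hj]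
      -- u kf and v kf are not in Uf
      have hukf : u kf ∉ Uf := by
        intro hmem
        obtain ⟨j, -, hj⟩ := Finset.mem_biUnion.mp hmem
        by_cases h1 : j.val < k
        · simp only [t, dif_pos h1, List.mem_toFinset] at hj
          exact ((hP j h1).2.2.2 kf h1).1 hj
        · by_cases h2 : k < j.val
          · simp only [t, dif_neg h1, if_pos h2, Finset.mem_insert,
              Finset.mem_singleton] at hj
            rcases hj with hj | hj
            · have he : k = j.val := congrArg Fin.val (huu kf j hj)
              omega
            · exact huv kf j hj
          · simp [t, dif_neg h1, if_neg h2] at hj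
      have hvkf : v kf ∉ Uf := by
        intro hmem
        obtain ⟨j, -, hj⟩ := Finset.mem_biUnion.mp hmem
        by_cases h1 : j.val < k
        · simp only [t, dif_pos h1, List.mem_toFinset] at hj
          exact ((hP j h1).2.2.2 kf h1).2 hj
        · by_cases h2 : k < j.val
          · simp only [t, dif_neg h1, if_pos h2, Finset.mem_insert,
              Finset.mem_singleton] at hj
            rcases hj with hj | hj
            · exact huv j kf hj.symm
            · have he : k = j.val := congrArg Fin.val (hvv kf j hj)
              omega
          · simp [t, dif_neg h1, if_neg h2] at hj
      -- use (m,d)-connectivity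
      obtain ⟨hconn, hdist⟩ := hG (↑Uf) hUm
      set S : Set V := (↑Uf : Set V)ᶜ with hS
      have hua : u kf ∈ S := hukf
      have hva : v kf ∈ S := hvkf
      obtain ⟨w, hw⟩ := hconn.exists_walk_length_eq_dist ⟨u kf, hua⟩ ⟨v kf, hva⟩
      have hwlen : w.bypass.length ≤ d := by
        calc w.bypass.length ≤ w.length := Walk.length_bypass_le _
          _ = _ := hw
          _ ≤ d := hdist _ _
      let f : G.induce S ↪g G := SimpleGraph.Embedding.induce S
      let W : G.Walk (u kf) (v kf) := w.bypass.map f.toHom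
      have hWpath : W.IsPath :=
        Walk.map_isPath_of_injective f.injective w.bypass_isPath
      have hWlen : W.length ≤ d := by
        exact (Walk.length_map _ _).trans_le hwlen
      have hWS : ∀ x, x ∈ W.support → x ∉ Uf := by
        intro x hx
        replace hx : x ∈ (w.bypass.map f.toHom).support := hx
        rw [Walk.support_map, List.mem_map] at hx
        obtain ⟨y, -, rfl⟩ := hx
        exact y.2
      -- assemble the new family
      refine ⟨fun i hi => if h : i.val < k then P i h
        else (show kf = i from Fin.ext (by simp [kf]; omega)) ▸ W, ?_⟩
      intro i hi
      by_cases h : i.val < k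
      · simp only [dif_pos h]
        obtain ⟨h1, h2, h3, h4⟩ := hP i h
        refine ⟨h1, h2, ?_, h4⟩
        intro j hj hji x hx
        have hjk : j.val < k := by omega
        simp only [dif_pos hjk]
        exact h3 j hjk hji x hx
      · have hik : kf = i := Fin.ext (by simp [kf]; omega)
        cases hik
        simp only [dif_neg h]
        refine ⟨hWpath, hWlen, ?_, ?_⟩
        · intro j hj hji x hx
          have hjk : j.val < k := hji
          simp only [dif_pos hjk]
          exact fun hxj => hWS x hx (hsubP j hjk x hxj)
        · intro j hj
          have := hsubE j hj
          exact ⟨fun hc => hWS _ hc this.1, fun hc => hWS _ hc this.2⟩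
  obtain ⟨P, hP⟩ := main ℓ le_rfl
  refine ⟨fun i => P i i.isLt, fun i => ⟨(hP i i.isLt).1, (hP i i.isLt).2.1⟩, ?_⟩
  intro i j hij x hxi hxj
  rcases lt_or_gt_of_ne (fun h : i.val = j.val => hij (Fin.ext h)) with h | h
  · exact (hP j j.isLt).2.2.1 i i.isLt h x hxj hxi
  · exact (hP i i.isLt).2.2.1 j j.isLt h x hxi hxj
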